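/- (A Pareto optimal cut-off must be the latest possible one.) Suppose u is uniform with values A > B > C. For all integers m, m' with kmin < m < m' ≤ N, the expected utilities over T1 of the cut-off profiles with cut-offs m and m' satisfy EU_{T1}(cut-off m') − EU_{T1}(cut-off m) = (m' − m)·(A − B)/(kmax − kmin); in particular EU_{T1}(cut-off m') > EU_{T1}(cut-off m), so the cut-off profile with cut-off N has strictly greater expected utility over T1 than any cut-off profile with cut-off strictly between kmin and N. -/

import Mathlib

/-- The two actions: `c` (canteen) and `o` (office). -/
inductive Act : Type
  | c : Act
  | o : Act
deriving DecidableEq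

open Act

/-- The set of arrival pairs
`T = {(k, k+1) : kmin ≤ k ≤ kmax - 1} ∪ {(k, k-1) : kmin + 1 ≤ k ≤ kmax}`. -/
noncomputable def T (kmin kmax : ℤ) : Finset (ℤ × ℤ) :=
  ((Finset.Icc kmin (kmax - 1)).image (fun k => (k, k + 1))) ∪
  ((Finset.Icc (kmin + 1) kmax).image (fun k => (k, k - 1)))

/-- Subgame `T1 = {(t1,t2) ∈ T : t1 ≡ kmin (mod 2)}`. -/
noncomputable def T1 (kmin kmax : ℤ) : Finset (ℤ × ℤ) :=
  (T kmin kmax).filter (fun t => t.1 % 2 = kmin % 2)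

/-- Subgame `T2 = {(t1,t2) ∈ T : t2 ≡ kmin (mod 2)}`. -/
noncomputable def T2 (kmin kmax : ℤ) : Finset (ℤ × ℤ) :=
  (T kmin kmax).filter (fun t => t.2 % 2 = kmin % 2)

/-- The expected utility of profile `s` over a set `S` of arrival pairs:
`EU_S(s) = (1/|S|) · Σ_{(t1,t2) ∈ S} u_{(t1,t2)}(s_1(t1), s_2(t2))`. -/
noncomputable def EU (u : ℤ × ℤ → Act → Act → ℝ) (s : (ℤ → Act) × (ℤ → Act))
    (S : Finset (ℤ × ℤ)) : ℝ :=
  (∑ t ∈ S, u t (s.1 t.1) (s.2 t.2)) / S.card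

/-- `s` is Pareto optimal over `S` if no profile `s'` has `EU_S(s') > EU_S(s)`. -/
def ParetoOptimal (u : ℤ × ℤ → Act → Act → ℝ) (S : Finset (ℤ × ℤ))
    (s : (ℤ → Act) × (ℤ → Act)) : Prop :=
  ¬ ∃ s' : (ℤ → Act) × (ℤ → Act), EU u s' S > EU u s S

/-- `u` satisfies conditions (U1) and (U2) on the arrival pairs of `T`. -/
def SatisfiesU1U2 (kmin kmax N : ℤ) (u : ℤ × ℤ → Act → Act → ℝ) : Prop :=
  ∀ t ∈ T kmin kmax,
    (t.1 < N ∧ t.2 < N →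
      u t c c > u t o o ∧ u t o o > u t c o ∧ u t c o = u t o c) ∧
    (N ≤ t.1 ∨ N ≤ t.2 →
      u t o o > u t c o ∧ u t c o = u t o c ∧ u t o c = u t c c)

/-- `u` is uniform with values `A > B > C` (the order is assumed separately). -/
def Uniform (kmin kmax N : ℤ) (u : ℤ × ℤ → Act → Act → ℝ) (A B C : ℝ) : Prop :=
  ∀ t ∈ T kmin kmax,
    (t.1 < N ∧ t.2 < N →
      u t c c = A ∧ u t o o = B ∧ u t c o = C ∧ u t o c = C) ∧
    (N ≤ t.1 ∨ N ≤ t.2 →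
      u t o o = B ∧ u t c c = C ∧ u t c o = C ∧ u t o c = C)

/-- The cut-off strategy with cut-off `m`: canteen iff arriving strictly before `m`. -/
def cutoff (m : ℤ) : ℤ → Act := fun k => if k < m then c else o

/-- The all-office strategy. -/
def allOffice : ℤ → Act := fun _ => o

/-! ### Auxiliary material for `stmt_10` -/

open Finset in
private lemma Icc_eq_Ico' (a b : ℤ) : Finset.Icc a (b - 1) = Finset.Ico a b := by
  ext x; simp only [Finset.mem_Icc, Finset.mem_Ico]; omega

open Finset in
/-- Structural lemma: a sum over `T1` is a sum over minima `j ∈ [kmin, kmax)`. -/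
private lemma T1_sum (kmin kmax : ℤ) (g : ℤ × ℤ → ℝ) :
    ∑ t ∈ T1 kmin kmax, g t =
      ∑ j ∈ Finset.Ico kmin kmax,
        (if j % 2 = kmin % 2 then g (j, j + 1) else g (j + 1, j)) := by
  classical
  have hdisj : Disjoint
      (((Finset.Icc kmin (kmax - 1)).filter (fun k => k % 2 = kmin % 2)).image
        (fun k => (k, k + 1)))
      (((Finset.Icc (kmin + 1) kmax).filter (fun k => k % 2 = kmin % 2)).image
        (fun k => (k, k - 1))) := by
    rw [Finset.disjoint_left]
    rintro a ha hb
    obtain ⟨x, -, rfl⟩ := Finset.mem_image.1 ha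
    obtain ⟨y, -, hy⟩ := Finset.mem_image.1 hb
    have h1 := congrArg Prod.fst hy
    have h2 := congrArg Prod.snd hy
    simp only at h1 h2
    omega
  have hT1 : T1 kmin kmax =
      (((Finset.Icc kmin (kmax - 1)).filter (fun k => k % 2 = kmin % 2)).image
        (fun k => (k, k + 1))) ∪
      (((Finset.Icc (kmin + 1) kmax).filter (fun k => k % 2 = kmin % 2)).image
        (fun k => (k, k - 1))) := by
    rw [T1, T, Finset.filter_union, Finset.filter_image, Finset.filter_image]
  rw [hT1, Finset.sum_union hdisj,
    Finset.sum_image (fun a _ b _ h => by simpa using congrArg Prod.fst h),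
    Finset.sum_image (fun a _ b _ h => by simpa using congrArg Prod.fst h)]
  -- reindex the second sum by `j = k - 1`
  have himg : ((Finset.Icc kmin (kmax - 1)).filter
        (fun j => ¬ j % 2 = kmin % 2)).image (fun j => j + 1) =
      (Finset.Icc (kmin + 1) kmax).filter (fun k => k % 2 = kmin % 2) := by
    ext x
    simp only [Finset.mem_image, Finset.mem_filter, Finset.mem_Icc]
    constructor
    · rintro ⟨j, ⟨⟨hj1, hj2⟩, hj3⟩, rfl⟩
      refine ⟨⟨by omega, by omega⟩, by omega⟩
    · rintro ⟨⟨hx1, hx2⟩, hx3⟩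
      exact ⟨x - 1, ⟨⟨by omega, by omega⟩, by omega⟩, by omega⟩
  rw [← himg, Finset.sum_image (fun a _ b _ h => by omega)]
  have e1 : ∑ k ∈ (Finset.Icc kmin (kmax - 1)).filter (fun k => k % 2 = kmin % 2),
      g (k, k + 1) =
      ∑ j ∈ (Finset.Icc kmin (kmax - 1)).filter (fun k => k % 2 = kmin % 2),
        (if j % 2 = kmin % 2 then g (j, j + 1) else g (j + 1, j)) := by
    refine Finset.sum_congr rfl fun x hx => ?_
    rw [if_pos (Finset.mem_filter.1 hx).2]
  have e2 : ∑ j ∈ (Finset.Icc kmin (kmax - 1)).filter (fun j => ¬ j % 2 = kmin % 2),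
      g (j + 1, j + 1 - 1) =
      ∑ j ∈ (Finset.Icc kmin (kmax - 1)).filter (fun j => ¬ j % 2 = kmin % 2),
        (if j % 2 = kmin % 2 then g (j, j + 1) else g (j + 1, j)) := by
    refine Finset.sum_congr rfl fun x hx => ?_
    rw [if_neg (Finset.mem_filter.1 hx).2]
    norm_num
  rw [e1, e2, Finset.sum_filter_add_sum_filter_not, Icc_eq_Ico']

/-- The value of a pair with minimum `j` under the cut-off profile `m`. -/
private noncomputable def wval (m : ℤ) (A B C : ℝ) (j : ℤ) : ℝ :=
  if j + 1 < m then A else if m ≤ j then B else C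

private lemma pair_val (kmin kmax N : ℤ) (A B C : ℝ)
    (u : ℤ × ℤ → Act → Act → ℝ) (hu : Uniform kmin kmax N u A B C)
    (m : ℤ) (hmN : m ≤ N) (j : ℤ) (hj : j ∈ Finset.Ico kmin kmax) :
    u (j, j + 1) (cutoff m j) (cutoff m (j + 1)) = wval m A B C j ∧
    u (j + 1, j) (cutoff m (j + 1)) (cutoff m j) = wval m A B C j := by
  rw [Finset.mem_Ico] at hj
  have ht1 : ((j : ℤ), j + 1) ∈ T kmin kmax := by
    refine Finset.mem_union_left _ (Finset.mem_image.2 ⟨j, ?_, rfl⟩)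
    rw [Finset.mem_Icc]; omega
  have ht2 : ((j + 1 : ℤ), j) ∈ T kmin kmax := by
    refine Finset.mem_union_right _ (Finset.mem_image.2 ⟨j + 1, ?_, ?_⟩)
    · rw [Finset.mem_Icc]; omega
    · norm_num
  have h1 := hu _ ht1
  have h2 := hu _ ht2
  simp only at h1 h2
  unfold cutoff wval
  by_cases hA : j + 1 < m
  · have hj1 : j < m := by omega
    rw [if_pos hj1, if_pos hA, if_pos hA]
    have hN : j < N ∧ j + 1 < N := ⟨by omega, by omega⟩
    exact ⟨(h1.1 ⟨hN.1, hN.2⟩).1, (h2.1 ⟨hN.2, hN.1⟩).1⟩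
  · by_cases hB : m ≤ j
    · rw [if_neg (by omega : ¬ j < m), if_neg hA, if_neg (by omega : ¬ j + 1 < m),
        if_pos hB]
      rcases lt_or_ge (j + 1) N with hN | hN
      · exact ⟨(h1.1 ⟨by omega, hN⟩).2.1, (h2.1 ⟨hN, by omega⟩).2.1⟩
      · exact ⟨(h1.2 (Or.inr hN)).1, (h2.2 (Or.inl hN)).1⟩
    · -- j = m - 1 : mixed actions
      rw [if_pos (by omega : j < m), if_neg hA, if_neg hB,
        if_neg (by omega : ¬ j + 1 < m)]
      rcases lt_or_ge (j + 1) N with hN | hN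
      · exact ⟨(h1.1 ⟨by omega, hN⟩).2.2.1, (h2.1 ⟨hN, by omega⟩).2.2.2⟩
      · exact ⟨(h1.2 (Or.inr hN)).2.2.1, (h2.2 (Or.inl hN)).2.2.2⟩

open Finset in
private lemma wval_sum (kmin kmax : ℤ) (A B C : ℝ) (m : ℤ)
    (hm1 : kmin < m) (hm2 : m ≤ kmax) :
    ∑ j ∈ Finset.Ico kmin kmax, wval m A B C j =
      ((m - 1 - kmin : ℤ) : ℝ) * A + C + ((kmax - m : ℤ) : ℝ) * B := by
  have hsplit : Finset.Ico kmin (m - 1) ∪ Finset.Ico (m - 1) kmax =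
      Finset.Ico kmin kmax :=
    Finset.Ico_union_Ico_eq_Ico (by omega) (by omega)
  have hsplit2 : Finset.Ico (m - 1) m ∪ Finset.Ico m kmax =
      Finset.Ico (m - 1) kmax :=
    Finset.Ico_union_Ico_eq_Ico (by omega) (by omega)
  rw [← hsplit, Finset.sum_union (Finset.Ico_disjoint_Ico_consecutive _ _ _),
    ← hsplit2, Finset.sum_union (Finset.Ico_disjoint_Ico_consecutive _ _ _)]
  have hsing : Finset.Ico (m - 1) m = {m - 1} := by
    ext x; simp only [Finset.mem_Ico, Finset.mem_singleton]; omega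
  have hc1 : ((Finset.Ico kmin (m - 1)).card : ℝ) = ((m - 1 - kmin : ℤ) : ℝ) := by
    rw [Int.card_Ico]
    norm_cast
    omega
  have hc3 : ((Finset.Ico m kmax).card : ℝ) = ((kmax - m : ℤ) : ℝ) := by
    rw [Int.card_Ico]
    norm_cast
    omega
  have s1 : ∑ j ∈ Finset.Ico kmin (m - 1), wval m A B C j =
      ((m - 1 - kmin : ℤ) : ℝ) * A := by
    rw [Finset.sum_congr rfl (fun x hx => ?_), Finset.sum_const, nsmul_eq_mul, hc1]
    rw [Finset.mem_Ico] at hx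
    rw [wval, if_pos (by omega)]
  have s2 : ∑ j ∈ Finset.Ico (m - 1) m, wval m A B C j = C := by
    rw [hsing, Finset.sum_singleton, wval, if_neg (by omega), if_neg (by omega)]
  have s3 : ∑ j ∈ Finset.Ico m kmax, wval m A B C j =
      ((kmax - m : ℤ) : ℝ) * B := by
    rw [Finset.sum_congr rfl (fun x hx => ?_), Finset.sum_const, nsmul_eq_mul, hc3]
    rw [Finset.mem_Ico] at hx
    rw [wval, if_neg (by omega), if_pos (by omega)]
  rw [s1, s2, s3]
  ring

private lemma card_T1 (kmin kmax : ℤ) (h : kmin ≤ kmax) :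
    ((T1 kmin kmax).card : ℝ) = ((kmax - kmin : ℤ) : ℝ) := by
  have := T1_sum kmin kmax (fun _ => (1 : ℝ))
  simp only [ite_self, Finset.sum_const, nsmul_eq_mul, mul_one] at this
  rw [this, Int.card_Ico]
  norm_cast
  omega

private lemma EU_cutoff (kmin kmax N : ℤ) (h2 : N ≤ kmax) (A B C : ℝ)
    (u : ℤ × ℤ → Act → Act → ℝ) (hu : Uniform kmin kmax N u A B C)
    (m : ℤ) (hm1 : kmin < m) (hmN : m ≤ N) :
    EU u (cutoff m, cutoff m) (T1 kmin kmax) =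
      (((m - 1 - kmin : ℤ) : ℝ) * A + C + ((kmax - m : ℤ) : ℝ) * B) /
        ((kmax - kmin : ℤ) : ℝ) := by
  rw [EU, card_T1 kmin kmax (by omega)]
  congr 1
  rw [T1_sum kmin kmax (fun t => u t (cutoff m t.1) (cutoff m t.2)),
    ← wval_sum kmin kmax A B C m hm1 (by omega)]
  refine Finset.sum_congr rfl fun j hj => ?_
  obtain ⟨e1, e2⟩ := pair_val kmin kmax N A B C u hu m hmN j hj
  split_ifs
  · exact e1
  · exact e2

/-- A Pareto optimal cut-off must be the latest possible one: for
`kmin < m < m' ≤ N`, the difference of expected utilities over `T1` is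
`(m' - m)·(A - B)/(kmax - kmin) > 0`. -/
theorem stmt_10 (kmin kmax N : ℤ) (h1 : kmin < N) (h2 : N ≤ kmax)
    (A B C : ℝ) (hAB : A > B) (hBC : B > C)
    (u : ℤ × ℤ → Act → Act → ℝ) (hu : Uniform kmin kmax N u A B C)
    (m m' : ℤ) (hm1 : kmin < m) (hmm' : m < m') (hm'N : m' ≤ N) :
    (EU u (cutoff m', cutoff m') (T1 kmin kmax) -
       EU u (cutoff m, cutoff m) (T1 kmin kmax) =
      ((m' - m : ℤ) : ℝ) * (A - B) / ((kmax - kmin : ℤ) : ℝ)) ∧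
    EU u (cutoff m', cutoff m') (T1 kmin kmax) >
      EU u (cutoff m, cutoff m) (T1 kmin kmax) := by
  have hd : ((kmax - kmin : ℤ) : ℝ) > 0 := by
    have : (0 : ℤ) < kmax - kmin := by omega
    exact_mod_cast this
  have e1 := EU_cutoff kmin kmax N h2 A B C u hu m hm1 (by omega)
  have e2 := EU_cutoff kmin kmax N h2 A B C u hu m' (by omega) hm'N
  have key : EU u (cutoff m', cutoff m') (T1 kmin kmax) -
      EU u (cutoff m, cutoff m) (T1 kmin kmax) =
      ((m' - m : ℤ) : ℝ) * (A - B) / ((kmax - kmin : ℤ) : ℝ) := by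
    rw [e1, e2, div_sub_div_same, div_eq_div_iff (by positivity) (by positivity)]
    push_cast
    ring
  refine ⟨key, ?_⟩
  have hpos : ((m' - m : ℤ) : ℝ) * (A - B) / ((kmax - kmin : ℤ) : ℝ) > 0 := by
    apply div_pos _ hd
    apply mul_pos _ (by linarith)
    exact_mod_cast (by omega : (0 : ℤ) < m' - m)
  linarith [key]
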